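/- The operator L_α^(N) is symmetric in L^2(μ_α^(N)): for all f, g ∈ C^2(Δ^(N)), ∫ f L_α^(N) g dμ_α^(N) = ∫ g L_α^(N) f dμ_α^(N). -/

import Mathlib

open MeasureTheory

noncomputable section

def simplex (N : ℕ) : Set (Fin N → ℝ) :=
  {x | (∀ i, 0 ≤ x i ∧ x i ≤ 1) ∧ ∑ i, x i ≤ 1}

def dirichletDensity (N : ℕ) (α : Fin (N + 1) → ℝ) (x : Fin N → ℝ) : ℝ :=
  (Real.Gamma (∑ k, α k) / ∏ k, Real.Gamma (α k)) *
    Real.rpow (1 - ∑ i, x i) (α (Fin.last N) - 1) *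
    ∏ i, Real.rpow (x i) (α (Fin.castSucc i) - 1)

def dirichlet (N : ℕ) (α : Fin (N + 1) → ℝ) : Measure (Fin N → ℝ) :=
  (volume.restrict (simplex N)).withDensity fun x => ENNReal.ofReal (dirichletDensity N α x)

/-- Partial derivative ∂_n f at x. -/
def pd (N : ℕ) (n : Fin N) (f : (Fin N → ℝ) → ℝ) (x : Fin N → ℝ) : ℝ :=
  fderiv ℝ f x (Pi.single n 1)

/-- The generator L_α^(N) = Σ_n [x_n(1−|x|₁)∂_n² + (α_n(1−|x|₁) − α_{N+1} x_n)∂_n]. -/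
def Lop (N : ℕ) (α : Fin (N + 1) → ℝ) (f : (Fin N → ℝ) → ℝ) (x : Fin N → ℝ) : ℝ :=
  ∑ n, (x n * (1 - ∑ i, x i) * pd N n (fun y => pd N n f y) x
    + (α (Fin.castSucc n) * (1 - ∑ i, x i) - α (Fin.last N) * x n) * pd N n f x)

/-! ### Auxiliary lemmas -/


lemma simplex_eq (N : ℕ) : simplex N = {x | (∀ i, 0 ≤ x i) ∧ ∑ i, x i ≤ 1} := by
  ext x
  constructor
  · rintro ⟨h1, h2⟩; exact ⟨fun i => (h1 i).1, h2⟩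
  · rintro ⟨h1, h2⟩
    refine ⟨fun i => ⟨h1 i, ?_⟩, h2⟩
    calc x i ≤ ∑ j, x j := Finset.single_le_sum (fun j _ => h1 j) (Finset.mem_univ i)
    _ ≤ 1 := h2

lemma measurableSet_simplex (N : ℕ) : MeasurableSet (simplex N) := by
  rw [simplex_eq]
  have h1 : MeasurableSet {x : Fin N → ℝ | ∀ i, 0 ≤ x i} := by
    rw [Set.setOf_forall]
    exact MeasurableSet.iInter fun i =>
      measurableSet_le measurable_const (measurable_pi_apply i)
  have h2 : MeasurableSet {x : Fin N → ℝ | ∑ i, x i ≤ 1} :=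
    measurableSet_le (Finset.measurable_sum _ fun i _ => measurable_pi_apply i)
      measurable_const
  exact h1.inter h2

lemma isCompact_simplex (N : ℕ) : IsCompact (simplex N) := by
  have hsub : simplex N ⊆ Set.pi Set.univ fun _ : Fin N => Set.Icc (0:ℝ) 1 := by
    intro x hx i _; exact hx.1 i
  have hclosed : IsClosed (simplex N) := by
    rw [simplex_eq]
    have h1 : IsClosed {x : Fin N → ℝ | ∀ i, 0 ≤ x i} := by
      rw [Set.setOf_forall]
      exact isClosed_iInter fun i => isClosed_le continuous_const (continuous_apply i)
    have h2 : IsClosed {x : Fin N → ℝ | ∑ i, x i ≤ 1} :=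
      isClosed_le (continuous_finset_sum _ fun i _ => continuous_apply i) continuous_const
    have : {x : Fin N → ℝ | (∀ i, 0 ≤ x i) ∧ ∑ i, x i ≤ 1}
        = {x : Fin N → ℝ | ∀ i, 0 ≤ x i} ∩ {x : Fin N → ℝ | ∑ i, x i ≤ 1} := rfl
    rw [this]
    exact h1.inter h2
  exact (isCompact_univ_pi fun _ => isCompact_Icc).of_isClosed_subset hclosed hsub

lemma contDiff_pd {N : ℕ} (n : Fin N) {f : (Fin N → ℝ) → ℝ} (hf : ContDiff ℝ 2 f) :
    ContDiff ℝ 1 (pd N n f) :=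
  (hf.fderiv_right (by norm_num)).clm_apply contDiff_const

lemma continuous_pd {N : ℕ} (n : Fin N) {f : (Fin N → ℝ) → ℝ} (hf : ContDiff ℝ 1 f) :
    Continuous (pd N n f) :=
  ((hf.fderiv_right (m := 0) (by norm_num)).clm_apply contDiff_const).continuous

lemma continuous_Lop {N : ℕ} (α : Fin (N + 1) → ℝ) {f : (Fin N → ℝ) → ℝ}
    (hf : ContDiff ℝ 2 f) : Continuous (Lop N α f) := by
  have h1 : ∀ n : Fin N, Continuous (pd N n f) := fun n => continuous_pd n (hf.of_le (by norm_num))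
  have h2 : ∀ n : Fin N, Continuous (pd N n (fun y => pd N n f y)) := fun n =>
    continuous_pd n (contDiff_pd n hf)
  have hs : Continuous fun x : Fin N → ℝ => ∑ i, x i :=
    continuous_finset_sum _ fun i _ => continuous_apply i
  unfold Lop
  refine continuous_finset_sum _ fun n _ => ?_
  exact (((continuous_apply n).mul (continuous_const.sub hs)).mul (h2 n)).add
    ((((continuous_const.mul (continuous_const.sub hs)).sub
      (continuous_const.mul (continuous_apply n)))).mul (h1 n))


open Set


def core (N : ℕ) (α : Fin (N + 1) → ℝ) (x : Fin N → ℝ) : ℝ :=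
  (1 - ∑ i, x i) ^ (α (Fin.last N) - 1) *
    ∏ i, (x i) ^ (α (Fin.castSucc i) - 1)

lemma measurable_core (N : ℕ) (α : Fin (N + 1) → ℝ) : Measurable (core N α) := by
  unfold core
  measurability

lemma core_nonneg {N : ℕ} (α : Fin (N + 1) → ℝ) {x : Fin N → ℝ} (hx : x ∈ simplex N) :
    0 ≤ core N α x := by
  rw [simplex_eq] at hx
  refine mul_nonneg (Real.rpow_nonneg (by linarith [hx.2]) _) ?_
  exact Finset.prod_nonneg fun i _ => Real.rpow_nonneg (hx.1 i) _

/-- 1-D: `∫⁻ t in Ioc 0 c, t^(a-1) = c^a / a`. -/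
lemma lint_rpow {a : ℝ} (ha : 0 < a) {c : ℝ} (hc : 0 ≤ c) :
    ∫⁻ t in Ioc (0:ℝ) c, ENNReal.ofReal (t ^ (a - 1)) = ENNReal.ofReal (c ^ a / a) := by
  have hint : IntegrableOn (fun t : ℝ => t ^ (a - 1)) (Ioc 0 c) volume :=
    (intervalIntegral.intervalIntegrable_rpow' (by linarith)).1
  have hnn : 0 ≤ᶠ[ae (volume.restrict (Ioc (0:ℝ) c))] fun t : ℝ => t ^ (a - 1) := by
    rw [Filter.EventuallyLE, ae_restrict_iff' measurableSet_Ioc]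
    exact Filter.Eventually.of_forall fun t ht => Real.rpow_nonneg ht.1.le _
  rw [← ofReal_integral_eq_lintegral_ofReal hint hnn]
  congr 1
  rw [← intervalIntegral.integral_of_le hc,
    integral_rpow (Or.inl (by linarith))]
  rw [Real.zero_rpow (by linarith : a - 1 + 1 ≠ 0)]
  ring_nf

/-- 1-D mirrored: `∫⁻ t in Ioc (L-c) L, (L-t)^(b-1) = c^b / b`. -/
lemma lint_rpow' {b : ℝ} (hb : 0 < b) {c L : ℝ} (hc : 0 ≤ c) :
    ∫⁻ t in Ioc (L - c) L, ENNReal.ofReal ((L - t) ^ (b - 1)) = ENNReal.ofReal (c ^ b / b) := by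
  have hint : IntegrableOn (fun t : ℝ => (L - t) ^ (b - 1)) (Ioc (L - c) L) volume := by
    have h := (intervalIntegral.intervalIntegrable_rpow' (a := c) (b := 0) (r := b - 1)
      (by linarith)).comp_sub_left L
    rw [sub_zero] at h
    exact h.1
  have hnn : 0 ≤ᶠ[ae (volume.restrict (Ioc (L - c) L))] fun t : ℝ => (L - t) ^ (b - 1) := by
    rw [Filter.EventuallyLE, ae_restrict_iff' measurableSet_Ioc]
    exact Filter.Eventually.of_forall fun t ht => Real.rpow_nonneg (by linarith [ht.2]) _
  rw [← ofReal_integral_eq_lintegral_ofReal hint hnn]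
  congr 1
  rw [← intervalIntegral.integral_of_le (by linarith : L - c ≤ L)]
  rw [intervalIntegral.integral_comp_sub_left (fun s : ℝ => s ^ (b - 1)) L,
    sub_self, sub_sub_cancel, integral_rpow (Or.inl (by linarith))]
  rw [Real.zero_rpow (by linarith : b - 1 + 1 ≠ 0)]
  ring_nf

lemma beta_bound {a b : ℝ} (ha : 0 < a) (hb : 0 < b) :
    ∃ C : ℝ, 0 ≤ C ∧ ∀ L : ℝ, 0 ≤ L →
      ∫⁻ t in Icc (0:ℝ) L, ENNReal.ofReal (t ^ (a - 1) * (L - t) ^ (b - 1))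
        ≤ ENNReal.ofReal (C * L ^ (a + b - 1)) := by
  set u : ℝ := 2⁻¹ with hu
  have hu0 : (0:ℝ) ≤ u := by norm_num
  refine ⟨(u ^ a * u ^ (b - 1) + u ^ a) / a + (u ^ (a - 1) * u ^ b + u ^ b) / b, by positivity,
    fun L hL0 => ?_⟩
  rcases eq_or_lt_of_le hL0 with rfl | hL
  · have : (volume : Measure ℝ).restrict (Icc (0:ℝ) 0) = 0 := by
      rw [Measure.restrict_eq_zero, Icc_self]
      exact measure_singleton 0
    rw [this, lintegral_zero_measure]
    exact zero_le
  -- L > 0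
  have h2 : Icc (0:ℝ) L =ᵐ[volume] Ioc (0:ℝ) L := (MeasureTheory.Ioc_ae_eq_Icc).symm
  rw [Measure.restrict_congr_set h2]
  have hsplit : Ioc (0:ℝ) L = Ioc 0 (L/2) ∪ Ioc (L/2) L :=
    (Set.Ioc_union_Ioc_eq_Ioc (by linarith) (by linarith)).symm
  rw [hsplit]
  refine le_trans (lintegral_union_le _ _ _) ?_
  have hmeas1 : Measurable fun t : ℝ => ENNReal.ofReal (t ^ (a - 1)) *
      ENNReal.ofReal ((L/2) ^ (b - 1) + L ^ (b - 1)) := by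
    have : Measurable fun t : ℝ => t ^ (a - 1) := by fun_prop
    exact this.ennreal_ofReal.mul_const _
  have hmeas2 : Measurable fun t : ℝ => ENNReal.ofReal ((L/2) ^ (a - 1) + L ^ (a - 1)) *
      ENNReal.ofReal ((L - t) ^ (b - 1)) := by
    have : Measurable fun t : ℝ => (L - t) ^ (b - 1) := by fun_prop
    exact this.ennreal_ofReal.const_mul _
  have half1 : ∫⁻ t in Ioc (0:ℝ) (L/2), ENNReal.ofReal (t ^ (a - 1) * (L - t) ^ (b - 1))
      ≤ ENNReal.ofReal ((L/2) ^ a / a * ((L/2) ^ (b - 1) + L ^ (b - 1))) := by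
    refine le_trans (setLIntegral_mono hmeas1 fun t ht => ?_) ?_
    · rw [← ENNReal.ofReal_mul (Real.rpow_nonneg ht.1.le _)]
      refine ENNReal.ofReal_le_ofReal (mul_le_mul_of_nonneg_left ?_ (Real.rpow_nonneg ht.1.le _))
      rcases le_total b 1 with h | h
      · refine le_trans (Real.rpow_le_rpow_of_nonpos (x := L/2) (y := L - t) (by linarith)
          (by linarith [ht.2]) (by linarith)) ?_
        exact le_add_of_nonneg_right (Real.rpow_nonneg (by linarith) _)
      · refine le_trans (Real.rpow_le_rpow (x := L - t) (y := L) (by linarith [ht.2])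
          (by linarith [ht.1]) (by linarith)) ?_
        exact le_add_of_nonneg_left (Real.rpow_nonneg (by linarith) _)
    · rw [lintegral_mul_const' _ _ (by exact ENNReal.ofReal_ne_top),
        lint_rpow ha (by linarith : (0:ℝ) ≤ L/2),
        ← ENNReal.ofReal_mul (by positivity)]
  have half2 : ∫⁻ t in Ioc (L/2) L, ENNReal.ofReal (t ^ (a - 1) * (L - t) ^ (b - 1))
      ≤ ENNReal.ofReal (((L/2) ^ (a - 1) + L ^ (a - 1)) * ((L/2) ^ b / b)) := by
    refine le_trans (setLIntegral_mono hmeas2 fun t ht => ?_) ?_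
    · rw [← ENNReal.ofReal_mul (by positivity : (0:ℝ) ≤ (L/2) ^ (a-1) + L ^ (a-1))]
      refine ENNReal.ofReal_le_ofReal (mul_le_mul_of_nonneg_right ?_
        (Real.rpow_nonneg (by linarith [ht.2]) _))
      rcases le_total a 1 with h | h
      · refine le_trans (Real.rpow_le_rpow_of_nonpos (x := L/2) (y := t) (by linarith)
          ht.1.le (by linarith)) ?_
        exact le_add_of_nonneg_right (Real.rpow_nonneg (by linarith) _)
      · refine le_trans (Real.rpow_le_rpow (x := t) (y := L) (by linarith [ht.1]) ht.2
          (by linarith)) ?_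
        exact le_add_of_nonneg_left (Real.rpow_nonneg (by linarith) _)
    · rw [lintegral_const_mul' _ _ (by exact ENNReal.ofReal_ne_top)]
      have hIoc : Ioc (L/2) L = Ioc (L - L/2) L := by rw [sub_half]
      rw [hIoc, lint_rpow' hb (by linarith : (0:ℝ) ≤ L/2),
        ← ENNReal.ofReal_mul (by positivity)]
  refine le_trans (add_le_add half1 half2) ?_
  rw [← ENNReal.ofReal_add (by positivity) (by positivity)]
  refine ENNReal.ofReal_le_ofReal (le_of_eq ?_)
  have hL2 : (L/2 : ℝ) = L * u := by rw [hu]; ring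
  have hP : L ^ (a + b - 1) = L ^ a * L ^ (b - 1) := by
    rw [← Real.rpow_add hL]; congr 1; ring
  have hQ : L ^ (a - 1) * L ^ b = L ^ a * L ^ (b - 1) := by
    rw [← Real.rpow_add hL, ← Real.rpow_add hL]; congr 1; ring
  have hm : ∀ z : ℝ, (L * u) ^ z = L ^ z * u ^ z := fun z => Real.mul_rpow hL.le hu0
  rw [hL2, hP, hm, hm, hm, hm]
  linear_combination ((u ^ (a - 1) * u ^ b + u ^ b) / b) * hQ

lemma sum_insertNth {M : ℕ} (n : Fin (M + 1)) (t : ℝ) (y : Fin M → ℝ) :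
    ∑ j, n.insertNth t y j = t + ∑ k, y k := by
  rw [Fin.sum_univ_succAbove _ n]
  simp

lemma mem_simplex_insertNth {M : ℕ} (n : Fin (M + 1)) (t : ℝ) (y : Fin M → ℝ) :
    n.insertNth t y ∈ simplex (M + 1) ↔ (∀ k, 0 ≤ y k) ∧ 0 ≤ t ∧ t + ∑ k, y k ≤ 1 := by
  rw [simplex_eq]
  constructor
  · rintro ⟨h1, h2⟩
    rw [sum_insertNth] at h2
    refine ⟨fun k => ?_, ?_, h2⟩
    · have := h1 (n.succAbove k); rwa [Fin.insertNth_apply_succAbove] at this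
    · have := h1 n; rwa [Fin.insertNth_apply_same] at this
  · rintro ⟨h1, h2, h3⟩
    refine ⟨?_, by rwa [sum_insertNth]⟩
    rw [Fin.forall_iff_succAbove n]
    constructor
    · rwa [Fin.insertNth_apply_same]
    · intro k; rw [Fin.insertNth_apply_succAbove]; exact h1 k

lemma core_lintegral_lt_top (N : ℕ) (α : Fin (N + 1) → ℝ) (hα : ∀ k, 0 < α k) :
    ∫⁻ x in simplex N, ENNReal.ofReal (core N α x) < ⊤ := by
  induction N with
  | zero =>
    have h1 : ∀ x : Fin 0 → ℝ, ENNReal.ofReal (core 0 α x) = 1 := fun x => by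
      simp [core, Real.rpow_def_of_pos]
    calc ∫⁻ x in simplex 0, ENNReal.ofReal (core 0 α x)
        = ∫⁻ _ in simplex 0, 1 := lintegral_congr fun x => h1 x
      _ = volume (simplex 0) := setLIntegral_one _
      _ ≤ volume (Set.univ : Set (Fin 0 → ℝ)) := measure_mono (Set.subset_univ _)
      _ < ⊤ := by
          rw [volume_pi, Measure.pi_univ]
          simp
  | succ M IH =>
    set i : Fin (M + 1) := Fin.last M with hi
    set a : ℝ := α (Fin.castSucc i) with ha'
    set b : ℝ := α (Fin.last (M + 1)) with hb'
    have ha : 0 < a := hα _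
    have hb : 0 < b := hα _
    set α' : Fin (M + 1) → ℝ :=
      Fin.snoc (fun k : Fin M => α k.castSucc.castSucc) (a + b) with hα'def
    have hα' : ∀ k, 0 < α' k := by
      intro k
      refine Fin.lastCases ?_ (fun j => ?_) k
      · rw [hα'def, Fin.snoc_last]; linarith
      · rw [hα'def, Fin.snoc_castSucc]; exact hα _
    obtain ⟨C, hC0, hC⟩ := beta_bound ha hb
    set Fm : (Fin (M + 1) → ℝ) → ENNReal :=
      (simplex (M + 1)).indicator fun x => ENNReal.ofReal (core (M + 1) α x) with hFm
    have hFmeas : Measurable Fm :=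
      ((measurable_core _ _).ennreal_ofReal).indicator (measurableSet_simplex _)
    rw [← lintegral_indicator (measurableSet_simplex _), ← hFm]
    set e := MeasurableEquiv.piFinSuccAbove (fun _ : Fin (M + 1) => ℝ) i with he
    have mp : MeasurePreserving e volume
        ((volume : Measure ℝ).prod (volume : Measure (Fin M → ℝ))) := by
      have h := measurePreserving_piFinSuccAbove (fun _ : Fin (M + 1) => (volume : Measure ℝ)) i
      rw [← volume_pi, ← volume_pi] at h
      exact h
    have hsymm : ∀ z : ℝ × (Fin M → ℝ), e.symm z = i.insertNth z.1 z.2 := by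
      intro z
      rw [he, MeasurableEquiv.piFinSuccAbove_symm_apply]
      rfl
    rw [← (mp.symm e).lintegral_comp_emb (MeasurableEquiv.measurableEmbedding _) Fm]
    rw [lintegral_prod_symm (fun z => Fm (e.symm z)) ((hFmeas.comp e.symm.measurable).aemeasurable)]
    have key : ∀ y : Fin M → ℝ, (∫⁻ t : ℝ, Fm (e.symm (t, y)))
        ≤ (simplex M).indicator (fun y => ENNReal.ofReal (C * core M α' y)) y := by
      intro y
      by_cases hy : (∀ k, 0 ≤ y k) ∧ ∑ k, y k ≤ 1
      · set L : ℝ := 1 - ∑ k, y k with hL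
        have hL0 : 0 ≤ L := by rw [hL]; linarith [hy.2]
        set Py : ℝ := ∏ k, (y k) ^ (α k.castSucc.castSucc - 1) with hPy
        have hPy0 : 0 ≤ Py :=
          Finset.prod_nonneg fun k _ => Real.rpow_nonneg (hy.1 k) _
        have step1 : ∀ t : ℝ, Fm (e.symm (t, y)) =
            (Set.Icc (0:ℝ) L).indicator
              (fun t => ENNReal.ofReal (Py * (t ^ (a - 1) * (L - t) ^ (b - 1)))) t := by
          intro t
          rw [hsymm]
          by_cases ht : t ∈ Set.Icc (0:ℝ) L
          · have hmem : i.insertNth t y ∈ simplex (M + 1) :=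
              (mem_simplex_insertNth i t y).mpr
                ⟨hy.1, ht.1, by have := ht.2; rw [hL] at this; linarith⟩
            rw [hFm, Set.indicator_of_mem hmem, Set.indicator_of_mem ht]
            congr 1
            show core (M + 1) α (i.insertNth t y) = _
            rw [core, sum_insertNth, Fin.prod_univ_succAbove
              (fun j => (Fin.insertNth (α := fun _ : Fin (M+1) => ℝ) i t y j) ^ (α j.castSucc - 1)) i]
            simp only [Fin.insertNth_apply_same, Fin.insertNth_apply_succAbove]
            rw [show (1 - (t + ∑ k, y k)) = L - t by rw [hL]; ring]
            rw [hi]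
            simp only [Fin.succAbove_last]
            rw [← ha', ← hPy]
            ring
          · have hmem : i.insertNth t y ∉ simplex (M + 1) := by
              intro hmem
              obtain ⟨-, h2, h3⟩ := (mem_simplex_insertNth i t y).mp hmem
              exact ht ⟨h2, by rw [hL]; linarith⟩
            rw [hFm, Set.indicator_of_notMem hmem, Set.indicator_of_notMem ht]
        have hymem : y ∈ simplex M := by rw [simplex_eq]; exact hy
        rw [Set.indicator_of_mem hymem]
        calc ∫⁻ t : ℝ, Fm (e.symm (t, y))
            = ∫⁻ t in Set.Icc (0:ℝ) L,
                ENNReal.ofReal (Py * (t ^ (a - 1) * (L - t) ^ (b - 1))) := by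
              rw [← lintegral_indicator measurableSet_Icc]
              exact lintegral_congr step1
          _ = ENNReal.ofReal Py *
              ∫⁻ t in Set.Icc (0:ℝ) L, ENNReal.ofReal (t ^ (a - 1) * (L - t) ^ (b - 1)) := by
              rw [← lintegral_const_mul' _ _ ENNReal.ofReal_ne_top]
              refine lintegral_congr fun t => ?_
              rw [← ENNReal.ofReal_mul hPy0]
          _ ≤ ENNReal.ofReal Py * ENNReal.ofReal (C * L ^ (a + b - 1)) :=
              mul_le_mul_right (hC L hL0) _
          _ = ENNReal.ofReal (C * core M α' y) := by
              rw [← ENNReal.ofReal_mul hPy0]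
              congr 1
              rw [core]
              have h1 : α' (Fin.last M) = a + b := by rw [hα'def, Fin.snoc_last]
              have h2 : ∀ k : Fin M, α' (Fin.castSucc k) = α k.castSucc.castSucc := fun k => by
                rw [hα'def, Fin.snoc_castSucc]
              rw [h1]
              have h3 : ∏ k, (y k) ^ (α' (Fin.castSucc k) - 1) = Py := by
                rw [hPy]
                exact Finset.prod_congr rfl fun k _ => by rw [h2]
              rw [h3, ← hL]
              ring
      · have h0 : ∀ t : ℝ, Fm (e.symm (t, y)) = 0 := by
          intro t
          rw [hsymm, hFm]
          refine Set.indicator_of_notMem (fun hmem => ?_) _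
          obtain ⟨h1, h2, h3⟩ := (mem_simplex_insertNth i t y).mp hmem
          exact hy ⟨h1, by linarith⟩
        simp only [h0, lintegral_zero]
        exact zero_le
    calc ∫⁻ y, ∫⁻ t, Fm (e.symm (t, y))
        ≤ ∫⁻ y, (simplex M).indicator (fun y => ENNReal.ofReal (C * core M α' y)) y :=
          lintegral_mono key
      _ = ∫⁻ y in simplex M, ENNReal.ofReal (C * core M α' y) :=
          lintegral_indicator (measurableSet_simplex _) _
      _ = ENNReal.ofReal C * ∫⁻ y in simplex M, ENNReal.ofReal (core M α' y) := by
          rw [← lintegral_const_mul' _ _ ENNReal.ofReal_ne_top]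
          exact lintegral_congr fun y => by rw [← ENNReal.ofReal_mul hC0]
      _ < ⊤ := ENNReal.mul_lt_top ENNReal.ofReal_lt_top (IH α' hα')

lemma dirichletDensity_eq (N : ℕ) (α : Fin (N + 1) → ℝ) (x : Fin N → ℝ) :
    dirichletDensity N α x =
      (Real.Gamma (∑ k, α k) / ∏ k, Real.Gamma (α k)) * core N α x := by
  simp only [dirichletDensity, core, Real.rpow_eq_pow]
  rw [mul_assoc]

lemma gammaConst_pos {N : ℕ} {α : Fin (N + 1) → ℝ} (hα : ∀ k, 0 < α k) :
    0 < Real.Gamma (∑ k, α k) / ∏ k, Real.Gamma (α k) := by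
  apply div_pos
  · exact Real.Gamma_pos_of_pos (Finset.sum_pos (fun k _ => hα k) Finset.univ_nonempty)
  · exact Finset.prod_pos fun k _ => Real.Gamma_pos_of_pos (hα k)

lemma measurable_dirichletDensity (N : ℕ) (α : Fin (N + 1) → ℝ) :
    Measurable (dirichletDensity N α) := by
  have : dirichletDensity N α = fun x =>
      (Real.Gamma (∑ k, α k) / ∏ k, Real.Gamma (α k)) * core N α x :=
    funext fun x => dirichletDensity_eq N α x
  rw [this]
  exact (measurable_core N α).const_mul _

lemma dirichletDensity_nonneg {N : ℕ} {α : Fin (N + 1) → ℝ} (hα : ∀ k, 0 < α k)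
    {x : Fin N → ℝ} (hx : x ∈ simplex N) : 0 ≤ dirichletDensity N α x := by
  rw [dirichletDensity_eq]
  exact mul_nonneg (gammaConst_pos hα).le (core_nonneg α hx)

lemma integrableOn_dirichletDensity (N : ℕ) (α : Fin (N + 1) → ℝ) (hα : ∀ k, 0 < α k) :
    IntegrableOn (dirichletDensity N α) (simplex N) volume := by
  constructor
  · exact (measurable_dirichletDensity N α).aestronglyMeasurable
  · rw [hasFiniteIntegral_iff_ofReal]
    · calc ∫⁻ x in simplex N, ENNReal.ofReal (dirichletDensity N α x)
          = ENNReal.ofReal (Real.Gamma (∑ k, α k) / ∏ k, Real.Gamma (α k)) *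
            ∫⁻ x in simplex N, ENNReal.ofReal (core N α x) := by
            rw [← lintegral_const_mul' _ _ ENNReal.ofReal_ne_top]
            exact lintegral_congr fun x => by
              rw [dirichletDensity_eq, ENNReal.ofReal_mul (gammaConst_pos hα).le]
        _ < ⊤ := ENNReal.mul_lt_top ENNReal.ofReal_lt_top (core_lintegral_lt_top N α hα)
    · rw [Filter.EventuallyLE, ae_restrict_iff' (measurableSet_simplex N)]
      exact Filter.Eventually.of_forall fun x hx => dirichletDensity_nonneg hα hx

lemma insertNth_eq_line {M : ℕ} (n : Fin (M + 1)) (y : Fin M → ℝ) (t : ℝ) :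
    (n.insertNth t y : Fin (M + 1) → ℝ) = (Fin.insertNth (α := fun _ : Fin (M + 1) => ℝ) n 0 y) + t • (Pi.single n 1 : Fin (M + 1) → ℝ) := by
  funext j
  refine Fin.succAboveCases n ?_ (fun k => ?_) j
  · simp
  · have hne : n.succAbove k ≠ n := Fin.succAbove_ne n k
    simp [Fin.insertNth_apply_succAbove, Pi.single_eq_of_ne hne]

lemma continuous_insertNth_line {M : ℕ} (n : Fin (M + 1)) (y : Fin M → ℝ) :
    Continuous fun t : ℝ => (n.insertNth t y : Fin (M + 1) → ℝ) := by
  have : (fun t : ℝ => (n.insertNth t y : Fin (M + 1) → ℝ))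
      = fun t => (Fin.insertNth (α := fun _ : Fin (M + 1) => ℝ) n 0 y) + t • (Pi.single n 1 : Fin (M + 1) → ℝ) :=
    funext (insertNth_eq_line n y)
  rw [this]
  exact continuous_const.add (continuous_id.smul continuous_const)

lemma hasDerivAt_comp_line {M : ℕ} {F : (Fin (M + 1) → ℝ) → ℝ} (hF : ContDiff ℝ 1 F)
    (n : Fin (M + 1)) (y : Fin M → ℝ) (t : ℝ) :
    HasDerivAt (fun s => F (n.insertNth s y)) (pd (M + 1) n F (n.insertNth t y)) t := by
  have h1 : HasDerivAt (fun s : ℝ => (n.insertNth s y : Fin (M + 1) → ℝ))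
      ((Pi.single n 1 : Fin (M + 1) → ℝ)) t := by
    have hline : (fun s : ℝ => (n.insertNth s y : Fin (M + 1) → ℝ))
        = fun s => (Fin.insertNth (α := fun _ : Fin (M + 1) => ℝ) n 0 y)
          + s • (Pi.single n 1 : Fin (M + 1) → ℝ) :=
      funext (insertNth_eq_line n y)
    rw [hline]
    simpa using ((hasDerivAt_id t).smul_const
      ((Pi.single n 1 : Fin (M + 1) → ℝ))).const_add
      (Fin.insertNth (α := fun _ : Fin (M + 1) => ℝ) n 0 y)
  have h2 : HasFDerivAt F (fderiv ℝ F (n.insertNth t y)) (n.insertNth t y) :=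
    (hF.differentiable one_ne_zero).differentiableAt.hasFDerivAt
  exact h2.comp_hasDerivAt t h1

lemma continuous_rpow_of_pos {p : ℝ} (hp : 0 < p) : Continuous fun t : ℝ => t ^ p :=
  continuous_iff_continuousAt.mpr fun t => Real.continuousAt_rpow_const t p (Or.inr hp.le)

lemma key_zero (M : ℕ) (α : Fin (M + 2) → ℝ) (hα : ∀ k, 0 < α k)
    (f g : (Fin (M + 1) → ℝ) → ℝ) (hf : ContDiff ℝ 2 f) (hg : ContDiff ℝ 2 g)
    (n : Fin (M + 1)) :
    ∫ x in simplex (M + 1), dirichletDensity (M + 1) α x *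
      (x n * (1 - ∑ i, x i) *
         (f x * pd (M + 1) n (fun z => pd (M + 1) n g z) x
           - g x * pd (M + 1) n (fun z => pd (M + 1) n f z) x)
        + (α (Fin.castSucc n) * (1 - ∑ i, x i) - α (Fin.last (M + 1)) * x n) *
         (f x * pd (M + 1) n g x - g x * pd (M + 1) n f x)) = 0 := by
  set a : ℝ := α (Fin.castSucc n) with ha'
  set b : ℝ := α (Fin.last (M + 1)) with hb'
  have ha : 0 < a := hα _
  have hb : 0 < b := hα _
  set ρ : (Fin (M + 1) → ℝ) → ℝ := dirichletDensity (M + 1) α with hρ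
  set D : (Fin (M + 1) → ℝ) → ℝ := fun x =>
      x n * (1 - ∑ i, x i) *
         (f x * pd (M + 1) n (fun z => pd (M + 1) n g z) x
           - g x * pd (M + 1) n (fun z => pd (M + 1) n f z) x)
        + (a * (1 - ∑ i, x i) - b * x n) *
         (f x * pd (M + 1) n g x - g x * pd (M + 1) n f x) with hD
  show ∫ x in simplex (M + 1), ρ x * D x = 0
  -- continuity of the various ingredients
  have hpdf : Continuous (pd (M + 1) n f) := continuous_pd n (hf.of_le (by norm_num))
  have hpdg : Continuous (pd (M + 1) n g) := continuous_pd n (hg.of_le (by norm_num))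
  have hpdf2 : Continuous (pd (M + 1) n (fun z => pd (M + 1) n f z)) :=
    continuous_pd n (contDiff_pd n hf)
  have hpdg2 : Continuous (pd (M + 1) n (fun z => pd (M + 1) n g z)) :=
    continuous_pd n (contDiff_pd n hg)
  have hsum : Continuous fun x : Fin (M + 1) → ℝ => ∑ i, x i :=
    continuous_finset_sum _ fun i _ => continuous_apply i
  have hDcont : Continuous D := by
    rw [hD]
    exact (((continuous_apply n).mul (continuous_const.sub hsum)).mul
        ((hf.continuous.mul hpdg2).sub (hg.continuous.mul hpdf2))).add
      (((continuous_const.mul (continuous_const.sub hsum)).sub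
        (continuous_const.mul (continuous_apply n))).mul
        ((hf.continuous.mul hpdg).sub (hg.continuous.mul hpdf)))
  -- integrability on the simplex
  obtain ⟨Cb, hCb⟩ := (isCompact_simplex (M + 1)).exists_bound_of_continuousOn
    hDcont.continuousOn
  have hInt : IntegrableOn (fun x => ρ x * D x) (simplex (M + 1)) volume := by
    refine Integrable.mono' ((integrableOn_dirichletDensity (M + 1) α hα).const_mul Cb)
      (((measurable_dirichletDensity (M + 1) α).mul hDcont.measurable).aestronglyMeasurable)
      ?_
    rw [ae_restrict_iff' (measurableSet_simplex _)]
    refine Filter.Eventually.of_forall fun x hx => ?_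
    have h0 : 0 ≤ ρ x := dirichletDensity_nonneg hα hx
    have h1 := hCb x hx
    rw [Real.norm_eq_abs] at h1 ⊢
    rw [abs_mul, abs_of_nonneg h0, mul_comm Cb (ρ x)]
    exact mul_le_mul_of_nonneg_left h1 h0
  have hIntInd : Integrable ((simplex (M + 1)).indicator fun x => ρ x * D x) volume :=
    (integrable_indicator_iff (measurableSet_simplex _)).mpr hInt
  rw [← integral_indicator (measurableSet_simplex _)]
  set G : (Fin (M + 1) → ℝ) → ℝ := (simplex (M + 1)).indicator (fun x => ρ x * D x) with hG
  -- move to the product space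
  set e := MeasurableEquiv.piFinSuccAbove (fun _ : Fin (M + 1) => ℝ) n with he
  have mp : MeasurePreserving e volume
      ((volume : Measure ℝ).prod (volume : Measure (Fin M → ℝ))) := by
    have h := measurePreserving_piFinSuccAbove (fun _ : Fin (M + 1) => (volume : Measure ℝ)) n
    rw [← volume_pi, ← volume_pi] at h
    exact h
  have hsymm : ∀ z : ℝ × (Fin M → ℝ), e.symm z = n.insertNth z.1 z.2 := by
    intro z
    rw [he, MeasurableEquiv.piFinSuccAbove_symm_apply]
    rfl
  have hGint : Integrable (fun z : ℝ × (Fin M → ℝ) => G (e.symm z))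
      ((volume : Measure ℝ).prod (volume : Measure (Fin M → ℝ))) := by
    have := ((mp.symm e).integrable_comp_emb
      (MeasurableEquiv.measurableEmbedding _) (g := G)).mpr hIntInd
    exact this
  rw [← (mp.symm e).integral_comp (MeasurableEquiv.measurableEmbedding _) G]
  rw [integral_prod_symm _ hGint]
  -- it suffices to show each line integral vanishes
  have hinner : ∀ y : Fin M → ℝ, ∫ t : ℝ, G (e.symm (t, y)) = 0 := by
    intro y
    by_cases hy : (∀ k, 0 ≤ y k) ∧ ∑ k, y k ≤ 1
    · -- the main case
      set L : ℝ := 1 - ∑ k, y k with hL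
      have hL0 : 0 ≤ L := by rw [hL]; linarith [hy.2]
      set W : ℝ → ℝ := fun t => f (n.insertNth t y) * pd (M + 1) n g (n.insertNth t y)
        - g (n.insertNth t y) * pd (M + 1) n f (n.insertNth t y) with hW
      set W2 : ℝ → ℝ := fun t =>
        f (n.insertNth t y) * pd (M + 1) n (fun z => pd (M + 1) n g z) (n.insertNth t y)
        - g (n.insertNth t y) * pd (M + 1) n (fun z => pd (M + 1) n f z) (n.insertNth t y)
        with hW2
      set Py : ℝ := ∏ k, (y k) ^ (α (Fin.castSucc (n.succAbove k)) - 1) with hPy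
      set Γc : ℝ := Real.Gamma (∑ k, α k) / ∏ k, Real.Gamma (α k) with hΓc
      set Cy : ℝ := Γc * Py with hCy
      set ψ : ℝ → ℝ := fun t => Cy * (t ^ (a - 1) * ((L - t) ^ (b - 1) *
        (t * (L - t) * W2 t + (a * (L - t) - b * t) * W t))) with hψ
      set Φ : ℝ → ℝ := fun t => Cy * (t ^ a * ((L - t) ^ b * W t)) with hΦ
      have hmem_iff : ∀ t : ℝ, n.insertNth t y ∈ simplex (M + 1) ↔ t ∈ Icc 0 L := by
        intro t
        rw [mem_simplex_insertNth]
        constructor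
        · rintro ⟨-, h2, h3⟩; exact ⟨h2, by rw [hL]; linarith⟩
        · rintro ⟨h2, h3⟩
          refine ⟨hy.1, h2, ?_⟩
          rw [hL] at h3; linarith
      have hpoint : ∀ t : ℝ, ρ (n.insertNth t y) * D (n.insertNth t y) = ψ t := by
        intro t
        rw [hρ, hD, hψ]
        simp only [dirichletDensity, Real.rpow_eq_pow, sum_insertNth,
          Fin.insertNth_apply_same]
        rw [Fin.prod_univ_succAbove
          (fun j => (Fin.insertNth (α := fun _ : Fin (M + 1) => ℝ) n t y j)
            ^ (α j.castSucc - 1)) n]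
        simp only [Fin.insertNth_apply_same, Fin.insertNth_apply_succAbove]
        rw [show (1 : ℝ) - (t + ∑ k, y k) = L - t from by rw [hL]; ring]
        rw [hCy, hΓc, hPy, hW, hW2, ← ha', ← hb']
        ring
      have hGeq : (fun t : ℝ => G (e.symm (t, y))) = fun t => (Icc (0:ℝ) L).indicator ψ t := by
        funext t
        rw [hsymm, hG]
        by_cases ht : t ∈ Icc (0:ℝ) L
        · rw [Set.indicator_of_mem ((hmem_iff t).mpr ht), Set.indicator_of_mem ht]
          exact hpoint t
        · rw [Set.indicator_of_notMem (fun hmem => ht ((hmem_iff t).mp hmem)),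
            Set.indicator_of_notMem ht]
      rw [hGeq, integral_indicator measurableSet_Icc, integral_Icc_eq_integral_Ioc,
        ← intervalIntegral.integral_of_le hL0]
      -- continuity facts along the line
      have hxt : Continuous fun t : ℝ => (n.insertNth t y : Fin (M + 1) → ℝ) :=
        continuous_insertNth_line n y
      have hWc : Continuous W := by
        rw [hW]
        exact ((hf.continuous.comp hxt).mul (hpdg.comp hxt)).sub
          ((hg.continuous.comp hxt).mul (hpdf.comp hxt))
      have hW2c : Continuous W2 := by
        rw [hW2]
        exact ((hf.continuous.comp hxt).mul (hpdg2.comp hxt)).sub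
          ((hg.continuous.comp hxt).mul (hpdf2.comp hxt))
      -- derivative of Φ on the interior
      have hderiv : ∀ t ∈ Ioo (0:ℝ) L, HasDerivAt Φ (ψ t) t := by
        intro t ht
        have ht0 : t ≠ 0 := ne_of_gt ht.1
        have htL : L - t ≠ 0 := ne_of_gt (by linarith [ht.2])
        have hu : HasDerivAt (fun s : ℝ => s ^ a) (a * t ^ (a - 1)) t :=
          Real.hasDerivAt_rpow_const (Or.inl ht0)
        have hv : HasDerivAt (fun s : ℝ => (L - s) ^ b) (-(b * (L - t) ^ (b - 1))) t := by
          have h1 : HasDerivAt (fun s : ℝ => L - s) (-1) t :=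
            (hasDerivAt_id t).const_sub L
          have h2 : HasDerivAt (fun u : ℝ => u ^ b) (b * (L - t) ^ (b - 1)) (L - t) :=
            Real.hasDerivAt_rpow_const (Or.inl htL)
          have h3 := h2.comp t h1
          exact h3.congr_deriv (by ring)
        have hfd : HasDerivAt (fun s => f (n.insertNth s y))
            (pd (M + 1) n f (n.insertNth t y)) t :=
          hasDerivAt_comp_line (hf.of_le (by norm_num)) n y t
        have hgd : HasDerivAt (fun s => g (n.insertNth s y))
            (pd (M + 1) n g (n.insertNth t y)) t :=
          hasDerivAt_comp_line (hg.of_le (by norm_num)) n y t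
        have hpfd : HasDerivAt (fun s => pd (M + 1) n f (n.insertNth s y))
            (pd (M + 1) n (fun z => pd (M + 1) n f z) (n.insertNth t y)) t :=
          hasDerivAt_comp_line (contDiff_pd n hf) n y t
        have hpgd : HasDerivAt (fun s => pd (M + 1) n g (n.insertNth s y))
            (pd (M + 1) n (fun z => pd (M + 1) n g z) (n.insertNth t y)) t :=
          hasDerivAt_comp_line (contDiff_pd n hg) n y t
        have hWd : HasDerivAt W (W2 t) t := by
          have h4 := (hfd.mul hpgd).sub (hgd.mul hpfd)
          rw [hW, hW2]
          refine h4.congr_deriv ?_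
          simp only [Pi.mul_apply, Pi.sub_apply]
          ring
        have h5 := (hu.mul (hv.mul hWd)).const_mul Cy
        rw [hΦ]
        refine h5.congr_deriv ?_
        simp only [Pi.mul_apply]
        have e1 : t ^ a = t ^ (a - 1) * t := by
          nth_rewrite 1 [show a = a - 1 + 1 by ring]
          rw [Real.rpow_add_one ht0]
        have e2 : (L - t) ^ b = (L - t) ^ (b - 1) * (L - t) := by
          nth_rewrite 1 [show b = b - 1 + 1 by ring]
          rw [Real.rpow_add_one htL]
        rw [hψ]
        rw [e1, e2]
        ring
      -- continuity of Φ on the closed interval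
      have hΦc : Continuous Φ := by
        rw [hΦ]
        refine continuous_const.mul ((continuous_rpow_of_pos ha).mul (Continuous.mul ?_ hWc))
        exact (continuous_rpow_of_pos hb).comp (continuous_const.sub continuous_id)
      -- interval integrability of ψ
      have hii : IntervalIntegrable ψ volume 0 L := by
        rcases eq_or_lt_of_le hL0 with hL0' | hLpos
        · rw [← hL0']
        set K : ℝ → ℝ := fun t => Cy * (t * (L - t) * W2 t + (a * (L - t) - b * t) * W t)
          with hK
        have hKc : Continuous K := by
          rw [hK]
          exact continuous_const.mul
            (((continuous_id.mul (continuous_const.sub continuous_id)).mul hW2c).add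
              (((continuous_const.mul (continuous_const.sub continuous_id)).sub
                (continuous_const.mul continuous_id)).mul hWc))
        have hψK : ψ = fun t => t ^ (a - 1) * ((L - t) ^ (b - 1) * K t) := by
          funext t
          rw [hψ, hK]
          ring
        rw [hψK]
        have h1 : IntervalIntegrable (fun t => t ^ (a - 1) * ((L - t) ^ (b - 1) * K t))
            volume 0 (L / 2) := by
          refine IntervalIntegrable.mul_continuousOn
            (intervalIntegral.intervalIntegrable_rpow' (by linarith)) ?_
          refine ContinuousOn.mul ?_ hKc.continuousOn
          intro s hs
          rw [Set.uIcc_of_le (by linarith : (0:ℝ) ≤ L / 2)] at hs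
          refine (Real.continuousAt_rpow_const _ _ (Or.inl ?_)).comp
            (continuous_const.sub continuous_id).continuousAt |>.continuousWithinAt
          have h2 := hs.2
          exact ne_of_gt (by simp only [Pi.sub_apply, id_eq]; linarith)
        have h2 : IntervalIntegrable (fun t => t ^ (a - 1) * ((L - t) ^ (b - 1) * K t))
            volume (L / 2) L := by
          have h0 := (intervalIntegral.intervalIntegrable_rpow' (a := L / 2) (b := 0)
            (r := b - 1) (by linarith)).comp_sub_left L
          rw [sub_zero, sub_half] at h0
          have h2' := h0.mul_continuousOn (g := fun t => t ^ (a - 1) * K t) ?_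
          · have hfe : (fun t => t ^ (a - 1) * ((L - t) ^ (b - 1) * K t))
                = fun t => (L - t) ^ (b - 1) * (t ^ (a - 1) * K t) := by
              funext t; ring
            rw [hfe]
            exact h2'
          · refine ContinuousOn.mul ?_ hKc.continuousOn
            intro s hs
            rw [Set.uIcc_of_le (by linarith : L / 2 ≤ L)] at hs
            refine (Real.continuousAt_rpow_const _ _ (Or.inl ?_)).continuousWithinAt
            have := hs.1
            exact ne_of_gt (by linarith)
        exact h1.trans h2
      rw [intervalIntegral.integral_eq_sub_of_hasDerivAt_of_le hL0
        hΦc.continuousOn hderiv hii]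
      rw [hΦ]
      simp only [sub_self]
      rw [Real.zero_rpow (ne_of_gt ha), Real.zero_rpow (ne_of_gt hb)]
      ring
    · -- outside the simplex: everything vanishes
      have h0 : ∀ t : ℝ, G (e.symm (t, y)) = 0 := by
        intro t
        rw [hsymm, hG]
        refine Set.indicator_of_notMem (fun hmem => ?_) _
        obtain ⟨h1, h2, h3⟩ := (mem_simplex_insertNth n t y).mp hmem
        exact hy ⟨h1, by linarith⟩
      simp only [h0]
      exact integral_zero _ _
  simp only [hinner]
  exact integral_zero _ _

lemma continuous_summand {M : ℕ} (α : Fin (M + 2) → ℝ) {f g : (Fin (M + 1) → ℝ) → ℝ}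
    (hf : ContDiff ℝ 2 f) (hg : ContDiff ℝ 2 g) (n : Fin (M + 1)) :
    Continuous fun x : Fin (M + 1) → ℝ =>
      x n * (1 - ∑ i, x i) *
         (f x * pd (M + 1) n (fun z => pd (M + 1) n g z) x
           - g x * pd (M + 1) n (fun z => pd (M + 1) n f z) x)
        + (α (Fin.castSucc n) * (1 - ∑ i, x i) - α (Fin.last (M + 1)) * x n) *
         (f x * pd (M + 1) n g x - g x * pd (M + 1) n f x) := by
  have hpdf : Continuous (pd (M + 1) n f) := continuous_pd n (hf.of_le (by norm_num))
  have hpdg : Continuous (pd (M + 1) n g) := continuous_pd n (hg.of_le (by norm_num))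
  have hpdf2 : Continuous (pd (M + 1) n (fun z => pd (M + 1) n f z)) :=
    continuous_pd n (contDiff_pd n hf)
  have hpdg2 : Continuous (pd (M + 1) n (fun z => pd (M + 1) n g z)) :=
    continuous_pd n (contDiff_pd n hg)
  have hsum : Continuous fun x : Fin (M + 1) → ℝ => ∑ i, x i :=
    continuous_finset_sum _ fun i _ => continuous_apply i
  exact (((continuous_apply n).mul (continuous_const.sub hsum)).mul
      ((hf.continuous.mul hpdg2).sub (hg.continuous.mul hpdf2))).add
    (((continuous_const.mul (continuous_const.sub hsum)).sub
      (continuous_const.mul (continuous_apply n))).mul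
      ((hf.continuous.mul hpdg).sub (hg.continuous.mul hpdf)))

/-- Symmetry of L_α^(N) in L²(μ_α^(N)). -/
theorem Lop_symmetric (N : ℕ) (hN : 1 ≤ N) (α : Fin (N + 1) → ℝ) (hα : ∀ k, 0 < α k)
    (f g : (Fin N → ℝ) → ℝ) (hf : ContDiff ℝ 2 f) (hg : ContDiff ℝ 2 g) :
    ∫ x, f x * Lop N α g x ∂(dirichlet N α) = ∫ x, g x * Lop N α f x ∂(dirichlet N α) := by
  obtain ⟨M, rfl⟩ : ∃ M, N = M + 1 := ⟨N - 1, by omega⟩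
  -- convert the integrals to weighted Lebesgue integrals on the simplex
  have conv : ∀ F : (Fin (M + 1) → ℝ) → ℝ, ∫ x, F x ∂(dirichlet (M + 1) α)
      = ∫ x in simplex (M + 1), dirichletDensity (M + 1) α x * F x ∂volume := by
    intro F
    rw [dirichlet]
    have hmeas : Measurable fun x => (dirichletDensity (M + 1) α x).toNNReal :=
      (measurable_dirichletDensity _ α).real_toNNReal
    rw [show (fun x => ENNReal.ofReal (dirichletDensity (M + 1) α x))
        = fun x => ((dirichletDensity (M + 1) α x).toNNReal : ENNReal) from rfl]
    rw [integral_withDensity_eq_integral_smul hmeas F]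
    refine setIntegral_congr_fun (measurableSet_simplex _) fun x hx => ?_
    rw [NNReal.smul_def, Real.coe_toNNReal _ (dirichletDensity_nonneg hα hx), smul_eq_mul]
  rw [conv, conv]
  -- integrability of products with the density
  have bound : ∀ F : (Fin (M + 1) → ℝ) → ℝ, Continuous F →
      IntegrableOn (fun x => dirichletDensity (M + 1) α x * F x) (simplex (M + 1)) volume := by
    intro F hF
    obtain ⟨C, hC⟩ := (isCompact_simplex (M + 1)).exists_bound_of_continuousOn hF.continuousOn
    refine Integrable.mono' ((integrableOn_dirichletDensity (M + 1) α hα).const_mul C)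
      (((measurable_dirichletDensity (M + 1) α).mul hF.measurable).aestronglyMeasurable) ?_
    rw [ae_restrict_iff' (measurableSet_simplex _)]
    refine Filter.Eventually.of_forall fun x hx => ?_
    have h0 : 0 ≤ dirichletDensity (M + 1) α x := dirichletDensity_nonneg hα hx
    have h1 := hC x hx
    rw [Real.norm_eq_abs] at h1 ⊢
    rw [abs_mul, abs_of_nonneg h0, mul_comm C (dirichletDensity (M + 1) α x)]
    exact mul_le_mul_of_nonneg_left h1 h0
  have h1 := bound (fun x => f x * Lop (M + 1) α g x)
    (hf.continuous.mul (continuous_Lop α hg))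
  have h2 := bound (fun x => g x * Lop (M + 1) α f x)
    (hg.continuous.mul (continuous_Lop α hf))
  rw [← sub_eq_zero, ← integral_sub h1 h2]
  have hre : ∀ x : Fin (M + 1) → ℝ,
      dirichletDensity (M + 1) α x * (f x * Lop (M + 1) α g x)
        - dirichletDensity (M + 1) α x * (g x * Lop (M + 1) α f x)
      = ∑ n : Fin (M + 1), dirichletDensity (M + 1) α x *
          (x n * (1 - ∑ i, x i) *
            (f x * pd (M + 1) n (fun z => pd (M + 1) n g z) x
              - g x * pd (M + 1) n (fun z => pd (M + 1) n f z) x)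
          + (α (Fin.castSucc n) * (1 - ∑ i, x i) - α (Fin.last (M + 1)) * x n) *
            (f x * pd (M + 1) n g x - g x * pd (M + 1) n f x)) := by
    intro x
    simp only [Lop, Finset.mul_sum]
    rw [← Finset.sum_sub_distrib]
    exact Finset.sum_congr rfl fun n _ => by ring
  simp only [hre]
  rw [integral_finset_sum _ fun n _ => bound _ (continuous_summand α hf hg n)]
  exact Finset.sum_eq_zero fun n _ => key_zero M α hα f g hf hg n

end
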